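/- arXiv:2404.02413 — 3 statements merged into one kernel-verified Lean document; each statement's English description precedes it below -/
import Mathlib

section
/- For every integer k ≥ 0 and every integer r ≥ 1, for all t in a neighborhood of 0 on which the moment generating function of Y is finite, one has the Taylor expansion (1/k!)·(E[e^{tY}] − 1)^k · e^{rt} = Σ_{n=0}^{∞} {n+r \brace k+r}_{r,Y} · t^n/n!; in particular {n+r \brace k+r}_{r,Y} = 0 whenever 0 ≤ n < k. -/
open MeasureTheory ProbabilityTheory Finset

/-- The probabilistic `r`-Stirling numbers of the second kind associated with a random
variable (with iid copies `Ys`):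
`{n+r \brace k+r}_{r,Y} = (1/k!) Σ_{j=0}^k binom(k,j) (-1)^(k-j) E[(S_j + r)^n]`,
where `S_j = Y_1 + ⋯ + Y_j`. -/
noncomputable def probStirling {Ω : Type*} [MeasurableSpace Ω] (μ : Measure Ω)
    (Ys : ℕ → Ω → ℝ) (r n k : ℕ) : ℝ :=
  (1 / (Nat.factorial k : ℝ)) * ∑ j ∈ Finset.range (k + 1),
    (k.choose j : ℝ) * (-1) ^ (k - j) *
      ∫ ω, ((∑ i ∈ Finset.range j, Ys i ω) + (r : ℝ)) ^ n ∂μ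

set_option maxHeartbeats 1000000

lemma hasSum_exp_real (x : ℝ) :
    HasSum (fun n : ℕ => x ^ n / n.factorial) (Real.exp x) := by
  rw [Real.exp_eq_exp_ℝ]
  exact NormedSpace.expSeries_div_hasSum_exp x

lemma abs_exp_sub_one_le' (x : ℝ) : |Real.exp x - 1| ≤ |x| * Real.exp |x| := by
  rcases le_or_gt 0 x with h | h
  · rw [abs_of_nonneg h, abs_of_nonneg (by nlinarith [Real.add_one_le_exp x] : (0:ℝ) ≤ Real.exp x - 1)]
    have h1 : 1 - x ≤ (Real.exp x)⁻¹ := by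
      have := Real.add_one_le_exp (-x)
      rw [Real.exp_neg] at this; linarith
    have h2 : Real.exp x * (Real.exp x)⁻¹ = 1 := mul_inv_cancel₀ (Real.exp_pos x).ne'
    nlinarith [Real.exp_pos x]
  · rw [abs_of_neg h, abs_of_nonpos (by nlinarith [Real.exp_lt_one_iff.2 h] : Real.exp x - 1 ≤ 0)]
    have h1 : x + 1 ≤ Real.exp x := Real.add_one_le_exp x
    have h2 : (1:ℝ) ≤ Real.exp (-x) := Real.one_le_exp (by linarith)
    nlinarith
lemma mgf_hasSum {Ω : Type*} [MeasurableSpace Ω] (μ : Measure Ω) [IsProbabilityMeasure μ]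
    (X : Ω → ℝ) (hX : Measurable X) (δ : ℝ)
    (h1 : Integrable (fun ω => Real.exp (δ * X ω)) μ)
    (h2 : Integrable (fun ω => Real.exp (-δ * X ω)) μ)
    (t : ℝ) (ht : |t| ≤ δ) :
    HasSum (fun n : ℕ => (∫ ω, X ω ^ n ∂μ) * t ^ n / n.factorial)
      (∫ ω, Real.exp (t * X ω) ∂μ) := by
  set g : Ω → ℝ := fun ω => Real.exp (δ * X ω) + Real.exp (-δ * X ω) with hgdef
  have hgint : Integrable g μ := h1.add h2
  have hdom : ∀ ω, Real.exp |t * X ω| ≤ g ω := by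
    intro ω
    have h3 : |t * X ω| ≤ δ * |X ω| := by
      rw [abs_mul]
      exact mul_le_mul_of_nonneg_right ht (abs_nonneg _)
    calc Real.exp |t * X ω| ≤ Real.exp (δ * |X ω|) := Real.exp_le_exp.2 h3
    _ ≤ g ω := by
      rcases abs_cases (X ω) with ⟨h, _⟩ | ⟨h, _⟩
      · rw [h]; exact le_add_of_nonneg_right (Real.exp_pos _).le
      · rw [h, mul_neg, ← neg_mul]; exact le_add_of_nonneg_left (Real.exp_pos _).le
  set F : ℕ → Ω → ℝ := fun n ω => (t * X ω) ^ n / n.factorial with hFdef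
  have hnorm : ∀ n ω, ‖F n ω‖ = |t * X ω| ^ n / n.factorial := by
    intro n ω
    rw [hFdef]
    simp [Real.norm_eq_abs, abs_div, abs_pow, abs_mul, Nat.abs_cast, mul_pow]
  have hFle : ∀ n ω, ‖F n ω‖ ≤ g ω := by
    intro n ω
    rw [hnorm]
    have h4 : |t * X ω| ^ n / n.factorial ≤ Real.exp |t * X ω| :=
      le_hasSum (hasSum_exp_real |t * X ω|) n (fun j _ => by positivity)
    exact h4.trans (hdom ω)
  have hFmeas : ∀ n, AEStronglyMeasurable (F n) μ :=
    fun n => (((hX.const_mul t).pow_const n).div_const _).aestronglyMeasurable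
  have hFint : ∀ n, Integrable (F n) μ :=
    fun n => Integrable.mono' hgint (hFmeas n) (ae_of_all _ (hFle n))
  have hFsum : Summable (fun n => ∫ ω, ‖F n ω‖ ∂μ) := by
    apply summable_of_sum_range_le (fun n => integral_nonneg (fun ω => norm_nonneg _))
    intro N
    rw [← integral_finset_sum _ (fun n _ => (hFint n).norm)]
    apply integral_mono (integrable_finset_sum _ fun n _ => (hFint n).norm) hgint
    intro ω
    calc ∑ n ∈ range N, ‖F n ω‖ = ∑ n ∈ range N, |t * X ω| ^ n / n.factorial :=
          Finset.sum_congr rfl (fun n _ => hnorm n ω)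
    _ ≤ Real.exp |t * X ω| :=
          sum_le_hasSum _ (fun j _ => by positivity) (hasSum_exp_real |t * X ω|)
    _ ≤ g ω := hdom ω
  have key := MeasureTheory.hasSum_integral_of_summable_integral_norm hFint hFsum
  have h5 : (∫ ω, (∑' n, F n ω) ∂μ) = ∫ ω, Real.exp (t * X ω) ∂μ := by
    refine integral_congr_ae (ae_of_all _ fun ω => ?_)
    exact (hasSum_exp_real (t * X ω)).tsum_eq
  have h6 : ∀ n, (∫ ω, F n ω ∂μ) = (∫ ω, X ω ^ n ∂μ) * t ^ n / n.factorial := by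
    intro n
    rw [hFdef]
    simp only [mul_pow]
    rw [integral_div, integral_const_mul]
    ring
  rw [h5] at key
  exact (funext h6 : (fun n => ∫ ω, F n ω ∂μ) = _) ▸ key
lemma coeff_eq_zero_of_bound (a : ℕ → ℝ) (F : ℝ → ℝ) (δ C : ℝ) (hδ : 0 < δ)
    (hC : 0 ≤ C) (k : ℕ)
    (hsum : ∀ t : ℝ, |t| < δ → HasSum (fun n => a n * t ^ n) (F t))
    (hbound : ∀ t : ℝ, |t| < δ → |F t| ≤ C * |t| ^ k) :
    ∀ n, n < k → a n = 0 := by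
  -- bound on coefficients at t1 = δ/2
  set t1 : ℝ := δ / 2 with ht1def
  have ht1 : 0 < t1 := by positivity
  have ht1δ : |t1| < δ := by rw [abs_of_pos ht1]; rw [ht1def]; linarith
  clear_value t1
  obtain ⟨M, hM⟩ : ∃ M : ℝ, ∀ n, |a n * t1 ^ n| ≤ M := by
    have h := (hsum t1 ht1δ).summable.tendsto_atTop_zero.abs
    have hb := h.bddAbove_range
    obtain ⟨M, hM⟩ := hb
    exact ⟨M, fun n => hM ⟨n, rfl⟩⟩
  have hM0 : 0 ≤ M := le_trans (abs_nonneg _) (hM 0)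
  intro m
  induction m using Nat.strong_induction_on with
  | _ m ih =>
    intro hmk
    set K : ℝ := C + 2 * M / t1 ^ (m + 1) with hKdef
    have hK0 : 0 ≤ K := by positivity
    set t0 : ℝ := min (t1 / 2) 1 with ht0def
    have ht00 : 0 < t0 := by positivity
    -- main estimate
    have hest : ∀ t : ℝ, 0 < t → t ≤ t0 → |a m| ≤ K * t := by
      intro t ht htt0
      have htle : t ≤ t1 / 2 := htt0.trans (min_le_left _ _)
      have hle1 : t ≤ 1 := htt0.trans (min_le_right _ _)
      have htδ : |t| < δ := by rw [abs_of_pos ht]; linarith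
      have hst := hsum t htδ
      -- the partial sum up to m equals a m * t ^ m
      have hps : ∑ i ∈ range (m + 1), a i * t ^ i = a m * t ^ m := by
        rw [Finset.sum_range_succ]
        have : ∑ i ∈ range m, a i * t ^ i = 0 :=
          Finset.sum_eq_zero fun i hi => by
            rw [ih i (mem_range.1 hi) ((mem_range.1 hi).trans hmk), zero_mul]
        rw [this, zero_add]
      -- tail
      have htail : HasSum (fun n => a (n + (m + 1)) * t ^ (n + (m + 1)))
          (F t - a m * t ^ m) := by
        have H := (hasSum_nat_add_iff' (m + 1)).2 hst
        rwa [hps] at H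
      set q : ℝ := t / t1 with hqdef
      have hq0 : 0 ≤ q := by positivity
      have hq1 : q ≤ 1 / 2 := by
        rw [hqdef, div_le_iff₀ ht1]; linarith
      have hqlt1 : q < 1 := lt_of_le_of_lt hq1 (by norm_num)
      have hmaj : ∀ n, |a (n + (m + 1)) * t ^ (n + (m + 1))| ≤ M * q ^ (m + 1) * q ^ n := by
        intro n
        have h1 : |a (n + (m + 1)) * t ^ (n + (m + 1))|
            = |a (n + (m + 1)) * t1 ^ (n + (m + 1))| * q ^ (n + (m + 1)) := by
          rw [abs_mul, abs_mul, abs_pow, abs_pow, abs_of_pos ht, abs_of_pos ht1,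
            hqdef, div_pow]
          field_simp
        rw [h1]
        have h2 : q ^ (n + (m + 1)) = q ^ (m + 1) * q ^ n := by ring
        rw [h2, ← mul_assoc]
        exact mul_le_mul_of_nonneg_right
          (mul_le_mul_of_nonneg_right (hM _) (by positivity)) (by positivity)
      have hmajsum : Summable (fun n : ℕ => M * q ^ (m + 1) * q ^ n) :=
        (summable_geometric_of_lt_one hq0 hqlt1).mul_left _
      have habs_sum : Summable (fun n => |a (n + (m + 1)) * t ^ (n + (m + 1))|) :=
        Summable.of_nonneg_of_le (fun n => abs_nonneg _) hmaj hmajsum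
      have hT : |F t - a m * t ^ m| ≤ M * q ^ (m + 1) * (1 - q)⁻¹ := by
        rw [← htail.tsum_eq]
        calc |∑' n, a (n + (m + 1)) * t ^ (n + (m + 1))|
            ≤ ∑' n, |a (n + (m + 1)) * t ^ (n + (m + 1))| := by
              simpa only [Real.norm_eq_abs] using
                norm_tsum_le_tsum_norm (f := fun n => a (n + (m + 1)) * t ^ (n + (m + 1)))
                  (by simpa only [Real.norm_eq_abs] using habs_sum)
        _ ≤ ∑' n : ℕ, M * q ^ (m + 1) * q ^ n := Summable.tsum_le_tsum hmaj habs_sum hmajsum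
        _ = M * q ^ (m + 1) * (1 - q)⁻¹ := by
              rw [tsum_mul_left, tsum_geometric_of_lt_one hq0 hqlt1]
      have hinv : (1 - q)⁻¹ ≤ 2 := by
        rw [inv_le_iff_one_le_mul₀ (by linarith)]
        nlinarith
      have hT2 : |F t - a m * t ^ m| ≤ 2 * M * q ^ (m + 1) := by
        calc |F t - a m * t ^ m| ≤ M * q ^ (m + 1) * (1 - q)⁻¹ := hT
        _ ≤ M * q ^ (m + 1) * 2 := mul_le_mul_of_nonneg_left hinv (by positivity)
        _ = 2 * M * q ^ (m + 1) := by ring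
      -- |a m| * t^m ≤ |F t| + |F t - a m t^m|
      have hcomb : |a m| * t ^ m ≤ C * t ^ k + 2 * M * q ^ (m + 1) := by
        have h1 : |a m * t ^ m| ≤ |F t| + |F t - a m * t ^ m| := by
          have := abs_sub_abs_le_abs_sub (F t) (F t - a m * t ^ m)
          have h2 : F t - (F t - a m * t ^ m) = a m * t ^ m := by ring
          calc |a m * t ^ m| = |F t - (F t - a m * t ^ m)| := by rw [h2]
          _ ≤ |F t| + |F t - a m * t ^ m| := abs_sub _ _
        have h3 : |a m * t ^ m| = |a m| * t ^ m := by
          rw [abs_mul, abs_of_pos (pow_pos ht _)]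
        have h4 : |F t| ≤ C * t ^ k := by
          have := hbound t htδ
          rwa [abs_of_pos ht] at this
        linarith [h1, hT2]
      -- divide by t^m
      have hq_pow : q ^ (m + 1) = t ^ m * (t / t1 ^ (m + 1)) := by
        rw [hqdef, div_pow]
        field_simp
        ring
      have htk : t ^ k ≤ t ^ m * t := by
        have : t ^ k ≤ t ^ (m + 1) := pow_le_pow_of_le_one ht.le hle1 hmk
        rw [pow_succ] at this
        linarith
      have hfinal : |a m| * t ^ m ≤ t ^ m * (K * t) := by
        calc |a m| * t ^ m ≤ C * t ^ k + 2 * M * q ^ (m + 1) := hcomb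
        _ ≤ C * (t ^ m * t) + 2 * M * (t ^ m * (t / t1 ^ (m + 1))) := by
            rw [hq_pow]
            have := mul_le_mul_of_nonneg_left htk hC
            linarith
        _ = t ^ m * (K * t) := by rw [hKdef]; field_simp
      have htm : 0 < t ^ m := pow_pos ht _
      have hfinal' : |a m| * t ^ m ≤ (K * t) * t ^ m := by nlinarith [hfinal]
      exact le_of_mul_le_mul_right hfinal' htm
    -- conclude a m = 0
    by_contra hne
    have hpos : 0 < |a m| := abs_pos.2 hne
    set s : ℝ := min t0 (|a m| / (2 * (K + 1))) with hsdef
    have hs0 : 0 < s := lt_min ht00 (by positivity)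
    have hs1 : s ≤ t0 := min_le_left _ _
    have hs2 : s ≤ |a m| / (2 * (K + 1)) := min_le_right _ _
    have := hest s hs0 hs1
    have hKs : K * s ≤ (K + 1) * s := by nlinarith
    have : |a m| ≤ (K + 1) * (|a m| / (2 * (K + 1))) := by
      calc |a m| ≤ K * s := this
      _ ≤ (K + 1) * s := hKs
      _ ≤ (K + 1) * (|a m| / (2 * (K + 1))) :=
          mul_le_mul_of_nonneg_left hs2 (by positivity)
    have h9 : (K + 1) * (|a m| / (2 * (K + 1))) = |a m| / 2 := by field_simp
    rw [h9] at this
    linarith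

/-- Generating function of the probabilistic `r`-Stirling numbers of the second kind:
for `t` in a neighborhood of `0` on which the mgf of `Y` is finite,
`(1/k!) (E[e^{tY}] - 1)^k e^{rt} = Σ_{n=0}^∞ {n+r \brace k+r}_{r,Y} t^n/n!`;
in particular `{n+r \brace k+r}_{r,Y} = 0` for `0 ≤ n < k`. -/
theorem probStirling_generating_function
    {Ω : Type*} [MeasurableSpace Ω] (μ : Measure Ω) [IsProbabilityMeasure μ]
    (Y : Ω → ℝ) (Ys : ℕ → Ω → ℝ)
    (hY : Measurable Y) (hYs : ∀ i, Measurable (Ys i))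
    (hindep : iIndepFun Ys μ)
    (hident : ∀ i, IdentDistrib (Ys i) Y μ μ)
    (ε : ℝ) (hε : 0 < ε)
    (hmgf : ∀ t : ℝ, |t| < ε → Integrable (fun ω => Real.exp (t * Y ω)) μ)
    (k r : ℕ) (hr : 1 ≤ r) :
    (∃ δ : ℝ, 0 < δ ∧ δ ≤ ε ∧ ∀ t : ℝ, |t| < δ →
      HasSum (fun n : ℕ => probStirling μ Ys r n k * t ^ n / (Nat.factorial n : ℝ))
        ((1 / (Nat.factorial k : ℝ)) * ((∫ ω, Real.exp (t * Y ω) ∂μ) - 1) ^ k *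
          Real.exp (r * t))) ∧
    ∀ n : ℕ, n < k → probStirling μ Ys r n k = 0 := by
  have hε4 : |(ε/4 : ℝ)| < ε := by rw [abs_of_pos (by linarith)]; linarith
  have hε4' : |(-(ε/4) : ℝ)| < ε := by rw [abs_neg, abs_of_pos (by linarith)]; linarith
  have hε2 : |(ε/2 : ℝ)| < ε := by rw [abs_of_pos (by linarith)]; linarith
  have hε2' : |(-(ε/2) : ℝ)| < ε := by rw [abs_neg, abs_of_pos (by linarith)]; linarith
  -- integrability of exponential moments of the iid copies
  have hYs_int : ∀ s : ℝ, |s| < ε → ∀ i, Integrable (fun ω => Real.exp (s * Ys i ω)) μ := by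
    intro s hs i
    have hid : IdentDistrib (fun ω => Real.exp (s * Ys i ω)) (fun ω => Real.exp (s * Y ω)) μ μ :=
      (hident i).comp (Real.measurable_exp.comp (measurable_const_mul s))
    exact hid.integrable_iff.2 (hmgf s hs)
  have hSint : ∀ s : ℝ, |s| < ε → ∀ j : ℕ,
      Integrable (fun ω => Real.exp (s * (∑ i ∈ Finset.range j, Ys i ω))) μ := by
    intro s hs j
    have h := hindep.integrable_exp_mul_sum hYs (s := Finset.range j)
      (fun i _ => hYs_int s hs i)
    simpa [Finset.sum_apply] using h
  have hXjint : ∀ s : ℝ, |s| < ε → ∀ j : ℕ,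
      Integrable (fun ω => Real.exp (s * ((∑ i ∈ Finset.range j, Ys i ω) + (r:ℝ)))) μ := by
    intro s hs j
    have h := (hSint s hs j).mul_const (Real.exp (s * r))
    refine h.congr (ae_of_all _ fun ω => ?_)
    simp only [mul_add, Real.exp_add]
  have hSmeas : ∀ j : ℕ, Measurable (fun ω => (∑ i ∈ Finset.range j, Ys i ω) + (r:ℝ)) :=
    fun j => (Finset.measurable_sum _ (fun i _ => hYs i)).add_const _
  -- the mgf of `S_j + r`
  have hmgfY : ∀ s : ℝ, ∀ i, (∫ ω, Real.exp (s * Ys i ω) ∂μ) = ∫ ω, Real.exp (s * Y ω) ∂μ :=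
    fun s i => ((hident i).comp (Real.measurable_exp.comp (measurable_const_mul s))).integral_eq
  have hmgfXj : ∀ s : ℝ, ∀ j : ℕ,
      (∫ ω, Real.exp (s * ((∑ i ∈ Finset.range j, Ys i ω) + (r:ℝ))) ∂μ)
        = (∫ ω, Real.exp (s * Y ω) ∂μ) ^ j * Real.exp (s * r) := by
    intro s j
    have h1 : (∫ ω, Real.exp (s * ((∑ i ∈ Finset.range j, Ys i ω) + (r:ℝ))) ∂μ)
        = (∫ ω, Real.exp (s * (∑ i ∈ Finset.range j, Ys i ω)) ∂μ) * Real.exp (s * r) := by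
      rw [← integral_mul_const]
      congr 1; funext ω; rw [mul_add, Real.exp_add]
    rw [h1]
    have h2 : (∫ ω, Real.exp (s * (∑ i ∈ Finset.range j, Ys i ω)) ∂μ)
        = mgf (∑ i ∈ Finset.range j, Ys i) μ s := by
      rw [mgf]; congr 1; funext ω; simp [Finset.sum_apply]
    have h3 : ∀ i ∈ Finset.range j, mgf (Ys i) μ s = ∫ ω, Real.exp (s * Y ω) ∂μ := by
      intro i _
      rw [mgf]
      exact hmgfY s i
    rw [h2, hindep.mgf_sum hYs (Finset.range j), Finset.prod_congr rfl h3,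
      Finset.prod_const, Finset.card_range]
  -- Taylor expansion for each `j`
  have hAj : ∀ t : ℝ, |t| ≤ ε/4 → ∀ j : ℕ,
      HasSum (fun n : ℕ =>
          (∫ ω, ((∑ i ∈ Finset.range j, Ys i ω) + (r:ℝ)) ^ n ∂μ) * t ^ n / n.factorial)
        ((∫ ω, Real.exp (t * Y ω) ∂μ) ^ j * Real.exp (t * r)) := by
    intro t ht j
    have h := mgf_hasSum μ _ (hSmeas j) (ε/4) (hXjint (ε/4) hε4 j) (hXjint (-(ε/4)) hε4' j) t ht
    rwa [hmgfXj t j] at h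
  -- the generating function identity
  have key : ∀ t : ℝ, |t| < ε/4 →
      HasSum (fun n : ℕ => probStirling μ Ys r n k * t ^ n / (Nat.factorial n : ℝ))
        ((1 / (Nat.factorial k : ℝ)) * ((∫ ω, Real.exp (t * Y ω) ∂μ) - 1) ^ k *
          Real.exp (r * t)) := by
    intro t ht
    have H := hasSum_sum (s := Finset.range (k+1))
      (f := fun j (n : ℕ) => ((1 / (Nat.factorial k : ℝ)) * (k.choose j : ℝ) * (-1:ℝ) ^ (k - j)) *
        ((∫ ω, ((∑ i ∈ Finset.range j, Ys i ω) + (r:ℝ)) ^ n ∂μ) * t ^ n / n.factorial))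
      (a := fun j => ((1 / (Nat.factorial k : ℝ)) * (k.choose j : ℝ) * (-1:ℝ) ^ (k - j)) *
        ((∫ ω, Real.exp (t * Y ω) ∂μ) ^ j * Real.exp (t * r)))
      (fun j _ => ((hAj t ht.le j).mul_left _))
    have hfun : (fun n : ℕ => ∑ j ∈ Finset.range (k+1),
        ((1 / (Nat.factorial k : ℝ)) * (k.choose j : ℝ) * (-1:ℝ) ^ (k - j)) *
        ((∫ ω, ((∑ i ∈ Finset.range j, Ys i ω) + (r:ℝ)) ^ n ∂μ) * t ^ n / n.factorial))
        = fun n : ℕ => probStirling μ Ys r n k * t ^ n / (Nat.factorial n : ℝ) := by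
      funext n
      rw [probStirling, Finset.mul_sum, Finset.sum_mul, Finset.sum_div]
      exact Finset.sum_congr rfl fun j _ => by ring
    have hval : ∑ j ∈ Finset.range (k+1),
        ((1 / (Nat.factorial k : ℝ)) * (k.choose j : ℝ) * (-1:ℝ) ^ (k - j)) *
        ((∫ ω, Real.exp (t * Y ω) ∂μ) ^ j * Real.exp (t * r))
        = (1 / (Nat.factorial k : ℝ)) * ((∫ ω, Real.exp (t * Y ω) ∂μ) - 1) ^ k *
          Real.exp ((r:ℝ) * t) := by
      have hap : ((∫ ω, Real.exp (t * Y ω) ∂μ) - 1) ^ k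
          = ∑ j ∈ Finset.range (k+1),
            (∫ ω, Real.exp (t * Y ω) ∂μ) ^ j * (-1:ℝ) ^ (k - j) * (k.choose j : ℝ) := by
        have h := add_pow (∫ ω, Real.exp (t * Y ω) ∂μ) (-1 : ℝ) k
        rw [show (∫ ω, Real.exp (t * Y ω) ∂μ) + (-1:ℝ)
          = (∫ ω, Real.exp (t * Y ω) ∂μ) - 1 by ring] at h
        exact h
      rw [mul_comm ((r:ℝ)) t, hap, Finset.mul_sum, Finset.sum_mul]
      exact Finset.sum_congr rfl fun j _ => by ring
    rw [hfun, hval] at H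
    exact H
  -- bound on |mgf - 1|
  have hmajint : Integrable
      (fun ω => (4/ε) * (Real.exp ((ε/2) * Y ω) + Real.exp (-(ε/2) * Y ω))) μ :=
    ((hmgf (ε/2) hε2).add (hmgf (-(ε/2)) hε2')).const_mul _
  have hC1int : Integrable (fun ω => |Y ω| * Real.exp ((ε/4) * |Y ω|)) μ := by
    refine Integrable.mono' hmajint
      ((hY.abs.mul ((hY.abs.const_mul (ε/4)).exp)).aestronglyMeasurable)
      (ae_of_all _ fun ω => ?_)
    rw [Real.norm_eq_abs, abs_of_nonneg (by positivity)]
    have h2 := Real.add_one_le_exp ((ε/4) * |Y ω|)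
    have h3 : (ε/4) * |Y ω| ≤ Real.exp ((ε/4) * |Y ω|) := by linarith
    have h4 := mul_le_mul_of_nonneg_left h3 (le_of_lt (by positivity : (0:ℝ) < 4/ε))
    have h5 : (4/ε) * ((ε/4) * |Y ω|) = |Y ω| := by field_simp
    have h1 : |Y ω| ≤ (4/ε) * Real.exp ((ε/4) * |Y ω|) := by linarith
    have hE := Real.exp_pos ((ε/4) * |Y ω|)
    have h7 : Real.exp ((ε/4)*|Y ω|) * Real.exp ((ε/4)*|Y ω|) = Real.exp ((ε/2)*|Y ω|) := by
      rw [← Real.exp_add]; ring_nf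
    have h8 : Real.exp ((ε/2)*|Y ω|) ≤ Real.exp ((ε/2) * Y ω) + Real.exp (-(ε/2) * Y ω) := by
      rcases abs_cases (Y ω) with ⟨h, _⟩ | ⟨h, _⟩
      · rw [h]; exact le_add_of_nonneg_right (Real.exp_pos _).le
      · rw [h, mul_neg, ← neg_mul]; exact le_add_of_nonneg_left (Real.exp_pos _).le
    calc |Y ω| * Real.exp ((ε/4) * |Y ω|)
        ≤ ((4/ε) * Real.exp ((ε/4) * |Y ω|)) * Real.exp ((ε/4) * |Y ω|) :=
          mul_le_mul_of_nonneg_right h1 hE.le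
    _ = (4/ε) * Real.exp ((ε/2) * |Y ω|) := by rw [mul_assoc, h7]
    _ ≤ (4/ε) * (Real.exp ((ε/2) * Y ω) + Real.exp (-(ε/2) * Y ω)) :=
          mul_le_mul_of_nonneg_left h8 (by positivity)
  set C1 : ℝ := ∫ ω, |Y ω| * Real.exp ((ε/4) * |Y ω|) ∂μ with hC1def
  have hC1nonneg : 0 ≤ C1 := integral_nonneg fun ω => by positivity
  have hMdiff : ∀ t : ℝ, |t| < ε/4 → |(∫ ω, Real.exp (t * Y ω) ∂μ) - 1| ≤ C1 * |t| := by
    intro t ht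
    have htε : |t| < ε := ht.trans (by linarith)
    have hint := hmgf t htε
    have h0 : (∫ ω, Real.exp (t * Y ω) ∂μ) - 1 = ∫ ω, (Real.exp (t * Y ω) - 1) ∂μ := by
      rw [integral_sub hint (integrable_const 1), integral_const, probReal_univ,
        smul_eq_mul, mul_one]
    rw [h0]
    have hptw : ∀ ω, |Real.exp (t * Y ω) - 1| ≤ |t| * (|Y ω| * Real.exp ((ε/4) * |Y ω|)) := by
      intro ω
      calc |Real.exp (t * Y ω) - 1| ≤ |t * Y ω| * Real.exp |t * Y ω| := abs_exp_sub_one_le' _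
      _ ≤ |t| * (|Y ω| * Real.exp ((ε/4) * |Y ω|)) := by
          rw [abs_mul, mul_assoc]
          refine mul_le_mul_of_nonneg_left ?_ (abs_nonneg t)
          refine mul_le_mul_of_nonneg_left ?_ (abs_nonneg (Y ω))
          apply Real.exp_le_exp.2
          exact mul_le_mul_of_nonneg_right ht.le (abs_nonneg _)
    calc |∫ ω, (Real.exp (t * Y ω) - 1) ∂μ| ≤ ∫ ω, |Real.exp (t * Y ω) - 1| ∂μ := by
          simpa [Real.norm_eq_abs] using
            norm_integral_le_integral_norm (μ := μ) (fun ω => Real.exp (t * Y ω) - 1)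
    _ ≤ ∫ ω, |t| * (|Y ω| * Real.exp ((ε/4) * |Y ω|)) ∂μ :=
          integral_mono ((hint.sub (integrable_const 1)).abs) (hC1int.const_mul _)
            hptw
    _ = |t| * C1 := integral_const_mul _ _
    _ = C1 * |t| := mul_comm _ _
  set C : ℝ := (1 / (Nat.factorial k : ℝ)) * C1 ^ k * Real.exp ((r:ℝ) * (ε/4)) with hCdef
  have hC0 : 0 ≤ C := by
    apply mul_nonneg (mul_nonneg (by positivity) (pow_nonneg hC1nonneg k)) (Real.exp_pos _).le
  have hFbound : ∀ t : ℝ, |t| < ε/4 →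
      |(1 / (Nat.factorial k : ℝ)) * ((∫ ω, Real.exp (t * Y ω) ∂μ) - 1) ^ k *
        Real.exp ((r:ℝ) * t)| ≤ C * |t| ^ k := by
    intro t ht
    rw [abs_mul, abs_mul, abs_pow,
      abs_of_nonneg (by positivity : (0:ℝ) ≤ 1 / (Nat.factorial k : ℝ)), Real.abs_exp]
    have h1 : |(∫ ω, Real.exp (t * Y ω) ∂μ) - 1| ^ k ≤ (C1 * |t|) ^ k :=
      pow_le_pow_left₀ (abs_nonneg _) (hMdiff t ht) k
    have h2 : Real.exp ((r:ℝ) * t) ≤ Real.exp ((r:ℝ) * (ε/4)) := by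
      apply Real.exp_le_exp.2
      apply mul_le_mul_of_nonneg_left _ (Nat.cast_nonneg r)
      exact (le_abs_self t).trans ht.le
    calc (1 / (Nat.factorial k : ℝ)) * |(∫ ω, Real.exp (t * Y ω) ∂μ) - 1| ^ k *
          Real.exp ((r:ℝ) * t)
        ≤ (1 / (Nat.factorial k : ℝ)) * ((C1 * |t|) ^ k) * Real.exp ((r:ℝ) * (ε/4)) := by
          apply mul_le_mul
            (mul_le_mul_of_nonneg_left h1 (by positivity)) h2 (Real.exp_pos _).le
          positivity
    _ = C * |t| ^ k := by rw [hCdef, mul_pow]; ring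
  refine ⟨⟨ε/4, by positivity, by linarith, fun t ht => key t ht⟩, ?_⟩
  intro n hn
  have hvan := coeff_eq_zero_of_bound
    (fun n => probStirling μ Ys r n k / (Nat.factorial n : ℝ))
    (fun t => (1 / (Nat.factorial k : ℝ)) * ((∫ ω, Real.exp (t * Y ω) ∂μ) - 1) ^ k *
      Real.exp ((r:ℝ) * t))
    (ε/4) C (by positivity) hC0 k
    (fun t ht => by
      have h := key t ht
      have heq : (fun n : ℕ => probStirling μ Ys r n k * t ^ n / (Nat.factorial n : ℝ))
          = fun n : ℕ => probStirling μ Ys r n k / (Nat.factorial n : ℝ) * t ^ n := by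
        funext n; ring
      rwa [heq] at h)
    hFbound n hn
  exact (div_eq_zero_iff.1 hvan).resolve_right
    (Nat.cast_ne_zero.2 n.factorial_ne_zero)
end

section
/- For every integer n ≥ 0, every integer r ≥ 0 and every real x, φ_{n+1,r}^{Y}(x) = x · Σ_{k=0}^{n} binom(n,k) E[Y^{k+1}] φ_{n−k,r}^{Y}(x) + r · φ_{n,r}^{Y}(x). -/
open MeasureTheory ProbabilityTheory Finset

/-- The probabilistic `r`-Bell polynomials associated with a random variable:
`φ_{n,r}^Y(x) = Σ_{k=0}^n {n+r \brace k+r}_{r,Y} x^k`. -/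
noncomputable def probBell {Ω : Type*} [MeasurableSpace Ω] (μ : Measure Ω)
    (Ys : ℕ → Ω → ℝ) (r n : ℕ) (x : ℝ) : ℝ :=
  ∑ k ∈ Finset.range (n + 1), probStirling μ Ys r n k * x ^ k

open scoped fwdDiff

section Aux

set_option linter.unusedSectionVars false

lemma mom_integrable {Ω : Type*} [MeasurableSpace Ω] {μ : Measure Ω}
    {Y : Ω → ℝ} (hY : Measurable Y) {ε : ℝ} (hε : 0 < ε)
    (hmgf : ∀ t : ℝ, |t| < ε → Integrable (fun ω => Real.exp (t * Y ω)) μ) (k : ℕ) :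
    Integrable (fun ω => Y ω ^ k) μ := by
  set t := ε / 2 with ht
  have ht0 : 0 < t := by positivity
  have h1 : Integrable (fun ω => Real.exp (t * Y ω)) μ :=
    hmgf t (by rw [abs_of_pos ht0]; simp only [ht]; linarith)
  have h2 : Integrable (fun ω => Real.exp (-t * Y ω)) μ :=
    hmgf (-t) (by rw [abs_neg, abs_of_pos ht0]; simp only [ht]; linarith)
  have hg : Integrable (fun ω => ((k.factorial : ℝ) / t ^ k) *
      (Real.exp (t * Y ω) + Real.exp (-t * Y ω))) μ := (h1.add h2).const_mul _
  refine hg.mono' ((hY.pow_const k).aestronglyMeasurable) (ae_of_all _ fun ω => ?_)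
  have base : ∀ x : ℝ, 0 ≤ x → x ^ k ≤ (k.factorial : ℝ) * Real.exp x := by
    intro x hx
    have h := Real.sum_le_exp_of_nonneg hx (k + 1)
    have h2 : x ^ k / (k.factorial : ℝ) ≤ ∑ i ∈ Finset.range (k + 1), x ^ i / i.factorial :=
      Finset.single_le_sum (f := fun i => x ^ i / (i.factorial : ℝ))
        (fun i _ => by positivity) (Finset.self_mem_range_succ k)
    have hkpos : (0 : ℝ) < k.factorial := by positivity
    rw [div_le_iff₀ hkpos] at h2
    calc x ^ k ≤ (∑ i ∈ Finset.range (k + 1), x ^ i / i.factorial) * k.factorial := h2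
      _ ≤ Real.exp x * k.factorial := by gcongr
      _ = (k.factorial : ℝ) * Real.exp x := by ring
  have hb : |Y ω| ^ k * t ^ k ≤ (k.factorial : ℝ) * (Real.exp (t * Y ω) + Real.exp (-t * Y ω)) := by
    have h3 : (t * |Y ω|) ^ k ≤ (k.factorial : ℝ) * Real.exp (t * |Y ω|) :=
      base _ (by positivity)
    have h4 : Real.exp (t * |Y ω|) ≤ Real.exp (t * Y ω) + Real.exp (-t * Y ω) := by
      rcases abs_cases (Y ω) with ⟨h, _⟩ | ⟨h, _⟩
      · rw [h]; nlinarith [Real.exp_pos (-t * Y ω)]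
      · rw [h]; rw [mul_neg, ← neg_mul]; nlinarith [Real.exp_pos (t * Y ω)]
    calc |Y ω| ^ k * t ^ k = (t * |Y ω|) ^ k := by rw [mul_pow]; ring
      _ ≤ (k.factorial : ℝ) * Real.exp (t * |Y ω|) := h3
      _ ≤ _ := by nlinarith [Real.exp_pos (t * |Y ω|)]
  rw [Real.norm_eq_abs, abs_pow, div_mul_eq_mul_div, le_div_iff₀ (by positivity : (0:ℝ) < t ^ k)]
  linarith

/-- Closed recursion computing `E[(S_j + r)^p]` from the moments `m`. -/
noncomputable def momA (m : ℕ → ℝ) (r : ℕ) : ℕ → ℕ → ℝ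
  | 0, p => (r : ℝ) ^ p
  | j+1, p => ∑ k ∈ Finset.range (p+1), (p.choose k : ℝ) * m k * momA m r j (p - k)

variable {Ω : Type*} [MeasurableSpace Ω] {μ : Measure Ω} [IsProbabilityMeasure μ]
  {Y : Ω → ℝ} {Ys : ℕ → Ω → ℝ}

lemma momYs_int (hident : ∀ i, IdentDistrib (Ys i) Y μ μ)
    (hmom : ∀ k, Integrable (fun ω => Y ω ^ k) μ) (a k : ℕ) :
    Integrable (fun ω => Ys a ω ^ k) μ :=
  (((hident a).comp (measurable_id.pow_const k)).symm).integrable_snd (hmom k)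

lemma momYs_eq (hident : ∀ i, IdentDistrib (Ys i) Y μ μ) (a k : ℕ) :
    ∫ ω, Ys a ω ^ k ∂μ = ∫ ω, Y ω ^ k ∂μ :=
  ((hident a).comp (measurable_id.pow_const k)).integral_eq

lemma indep_pow_sum (hYs : ∀ i, Measurable (Ys i))
    (hindep : iIndepFun Ys μ)
    {a : ℕ} {s : Finset ℕ} (ha : a ∉ s) (r k q : ℕ) :
    IndepFun (fun ω => Ys a ω ^ k) (fun ω => ((∑ i ∈ s, Ys i ω) + (r : ℝ)) ^ q) μ := by
  have h0 : IndepFun (Ys a) (∑ i ∈ s, Ys i) μ :=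
    (hindep.indepFun_finsetSum_of_notMem hYs ha).symm
  have h := h0.comp (φ := fun x : ℝ => x ^ k) (ψ := fun x : ℝ => (x + (r:ℝ)) ^ q)
    (measurable_id.pow_const k) ((measurable_id.add_const _).pow_const q)
  convert h using 2 with ω
  all_goals simp [Function.comp, Finset.sum_apply]

lemma key (hY : Measurable Y) (hYs : ∀ i, Measurable (Ys i))
    (hindep : iIndepFun Ys μ)
    (hident : ∀ i, IdentDistrib (Ys i) Y μ μ)
    (hmom : ∀ k, Integrable (fun ω => Y ω ^ k) μ) (r : ℕ) (s : Finset ℕ) (p : ℕ) :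
    Integrable (fun ω => ((∑ i ∈ s, Ys i ω) + (r:ℝ)) ^ p) μ ∧
    ∫ ω, ((∑ i ∈ s, Ys i ω) + (r:ℝ)) ^ p ∂μ =
      momA (fun k => ∫ ω, Y ω ^ k ∂μ) r s.card p := by
  classical
  induction s using Finset.induction_on generalizing p with
  | empty => simp [momA]
  | @insert a t ha ih =>
    have hsum : ∀ ω, ((∑ i ∈ insert a t, Ys i ω) + (r:ℝ)) ^ p =
        ∑ k ∈ Finset.range (p+1), (p.choose k : ℝ) *
          (Ys a ω ^ k * ((∑ i ∈ t, Ys i ω) + (r:ℝ)) ^ (p - k)) := by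
      intro ω
      rw [Finset.sum_insert ha, add_assoc, add_pow]
      exact Finset.sum_congr rfl fun k _ => by ring
    have hterm : ∀ k, Integrable
        (fun ω => Ys a ω ^ k * ((∑ i ∈ t, Ys i ω) + (r:ℝ)) ^ (p - k)) μ :=
      fun k => (indep_pow_sum hYs hindep ha r k (p-k)).integrable_mul
        (momYs_int hident hmom a k) ((ih (p-k)).1)
    constructor
    · have : Integrable (fun ω => ∑ k ∈ Finset.range (p+1), (p.choose k : ℝ) *
          (Ys a ω ^ k * ((∑ i ∈ t, Ys i ω) + (r:ℝ)) ^ (p - k))) μ :=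
        integrable_finset_sum _ fun k _ => (hterm k).const_mul _
      exact this.congr (ae_of_all _ fun ω => (hsum ω).symm)
    · calc ∫ ω, ((∑ i ∈ insert a t, Ys i ω) + (r:ℝ)) ^ p ∂μ
          = ∫ ω, ∑ k ∈ Finset.range (p+1), (p.choose k : ℝ) *
            (Ys a ω ^ k * ((∑ i ∈ t, Ys i ω) + (r:ℝ)) ^ (p - k)) ∂μ :=
            integral_congr_ae (ae_of_all _ hsum)
        _ = ∑ k ∈ Finset.range (p+1), ∫ ω, (p.choose k : ℝ) *
            (Ys a ω ^ k * ((∑ i ∈ t, Ys i ω) + (r:ℝ)) ^ (p - k)) ∂μ :=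
            integral_finset_sum _ fun k _ => (hterm k).const_mul _
        _ = ∑ k ∈ Finset.range (p+1), (p.choose k : ℝ) *
            ((∫ ω, Y ω ^ k ∂μ) * momA (fun k => ∫ ω, Y ω ^ k ∂μ) r t.card (p - k)) := by
            refine Finset.sum_congr rfl fun k _ => ?_
            rw [integral_const_mul]
            congr 1
            rw [(indep_pow_sum hYs hindep ha r k (p-k)).integral_fun_mul_eq_mul_integral
              (momYs_int hident hmom a k).aestronglyMeasurable ((ih (p-k)).1).aestronglyMeasurable,
              momYs_eq hident, (ih (p-k)).2]
        _ = momA (fun k => ∫ ω, Y ω ^ k ∂μ) r (insert a t).card p := by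
            rw [Finset.card_insert_of_notMem ha, momA]
            exact Finset.sum_congr rfl fun k _ => by ring

lemma key2 (hY : Measurable Y) (hYs : ∀ i, Measurable (Ys i))
    (hindep : iIndepFun Ys μ)
    (hident : ∀ i, IdentDistrib (Ys i) Y μ μ)
    (hmom : ∀ k, Integrable (fun ω => Y ω ^ k) μ) (r : ℕ) {a : ℕ} {s : Finset ℕ}
    (ha : a ∉ s) (p q : ℕ) :
    Integrable (fun ω => Ys a ω ^ p * ((∑ i ∈ s, Ys i ω) + (r:ℝ)) ^ q) μ ∧
    ∫ ω, Ys a ω ^ p * ((∑ i ∈ s, Ys i ω) + (r:ℝ)) ^ q ∂μ =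
      (∫ ω, Y ω ^ p ∂μ) * momA (fun k => ∫ ω, Y ω ^ k ∂μ) r s.card q := by
  constructor
  · exact (indep_pow_sum hYs hindep ha r p q).integrable_mul
      (momYs_int hident hmom a p) ((key hY hYs hindep hident hmom r s q).1)
  · rw [(indep_pow_sum hYs hindep ha r p q).integral_fun_mul_eq_mul_integral
      (momYs_int hident hmom a p).aestronglyMeasurable
      ((key hY hYs hindep hident hmom r s q).1).aestronglyMeasurable,
      momYs_eq hident, (key hY hYs hindep hident hmom r s q).2]

lemma momA_rec (hY : Measurable Y) (hYs : ∀ i, Measurable (Ys i))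
    (hindep : iIndepFun Ys μ)
    (hident : ∀ i, IdentDistrib (Ys i) Y μ μ)
    (hmom : ∀ k, Integrable (fun ω => Y ω ^ k) μ) (r j n : ℕ) :
    momA (fun k => ∫ ω, Y ω ^ k ∂μ) r j (n+1) =
      (r : ℝ) * momA (fun k => ∫ ω, Y ω ^ k ∂μ) r j n +
      (j : ℝ) * ∑ k ∈ Finset.range (n+1), (n.choose k : ℝ) * (∫ ω, Y ω ^ (k+1) ∂μ) *
        momA (fun k => ∫ ω, Y ω ^ k ∂μ) r (j-1) (n-k) := by
  classical
  set m : ℕ → ℝ := fun k => ∫ ω, Y ω ^ k ∂μ with hm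
  have hmem : ∀ i ∈ Finset.range j, i ∉ (Finset.range j).erase i := fun i _ =>
    Finset.notMem_erase i _
  have hptwise : ∀ ω, ((∑ i ∈ Finset.range j, Ys i ω) + (r:ℝ)) ^ (n+1) =
      (r:ℝ) * ((∑ i ∈ Finset.range j, Ys i ω) + (r:ℝ)) ^ n +
      ∑ i ∈ Finset.range j, ∑ k ∈ Finset.range (n+1), (n.choose k : ℝ) *
        (Ys i ω ^ (k+1) * ((∑ l ∈ (Finset.range j).erase i, Ys l ω) + (r:ℝ)) ^ (n-k)) := by
    intro ω
    have h1 : ∀ i ∈ Finset.range j,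
        Ys i ω * ((∑ l ∈ Finset.range j, Ys l ω) + (r:ℝ)) ^ n =
        ∑ k ∈ Finset.range (n+1), (n.choose k : ℝ) *
          (Ys i ω ^ (k+1) * ((∑ l ∈ (Finset.range j).erase i, Ys l ω) + (r:ℝ)) ^ (n-k)) := by
      intro i hi
      have hS : (∑ l ∈ Finset.range j, Ys l ω) =
          Ys i ω + ∑ l ∈ (Finset.range j).erase i, Ys l ω :=
        (Finset.add_sum_erase _ _ hi).symm
      rw [hS, add_assoc, add_pow, Finset.mul_sum]
      exact Finset.sum_congr rfl fun k _ => by ring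
    calc ((∑ i ∈ Finset.range j, Ys i ω) + (r:ℝ)) ^ (n+1)
        = (r:ℝ) * ((∑ i ∈ Finset.range j, Ys i ω) + (r:ℝ)) ^ n +
          ∑ i ∈ Finset.range j, Ys i ω *
            ((∑ l ∈ Finset.range j, Ys l ω) + (r:ℝ)) ^ n := by
          rw [pow_succ, ← Finset.sum_mul]; ring
      _ = _ := by rw [Finset.sum_congr rfl h1]
  have hint1 : Integrable (fun ω =>
      (r:ℝ) * ((∑ i ∈ Finset.range j, Ys i ω) + (r:ℝ)) ^ n) μ :=
    ((key hY hYs hindep hident hmom r (Finset.range j) n).1).const_mul _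
  have hint2 : ∀ i ∈ Finset.range j, ∀ k ∈ Finset.range (n+1), Integrable (fun ω =>
      (n.choose k : ℝ) * (Ys i ω ^ (k+1) *
        ((∑ l ∈ (Finset.range j).erase i, Ys l ω) + (r:ℝ)) ^ (n-k))) μ :=
    fun i hi k _ => ((key2 hY hYs hindep hident hmom r (hmem i hi) (k+1) (n-k)).1).const_mul _
  have lhs_eq : ∫ ω, ((∑ i ∈ Finset.range j, Ys i ω) + (r:ℝ)) ^ (n+1) ∂μ =
      momA m r j (n+1) := by
    have := (key hY hYs hindep hident hmom r (Finset.range j) (n+1)).2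
    rwa [Finset.card_range] at this
  rw [← lhs_eq, integral_congr_ae (ae_of_all _ hptwise), integral_add hint1
    (integrable_finset_sum _ fun i hi => integrable_finset_sum _ fun k hk => hint2 i hi k hk),
    integral_const_mul, integral_finset_sum _ (fun i hi =>
      integrable_finset_sum _ fun k hk => hint2 i hi k hk)]
  have hcardj : momA m r (Finset.range j).card n = momA m r j n := by rw [Finset.card_range]
  congr 1
  · rw [(key hY hYs hindep hident hmom r (Finset.range j) n).2, hcardj]
  · have hin : ∀ i ∈ Finset.range j,
        ∫ ω, ∑ k ∈ Finset.range (n+1), (n.choose k : ℝ) *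
          (Ys i ω ^ (k+1) * ((∑ l ∈ (Finset.range j).erase i, Ys l ω) + (r:ℝ)) ^ (n-k)) ∂μ =
        ∑ k ∈ Finset.range (n+1), (n.choose k : ℝ) * (∫ ω, Y ω ^ (k+1) ∂μ) *
          momA m r (j-1) (n-k) := by
      intro i hi
      rw [integral_finset_sum _ fun k hk => hint2 i hi k hk]
      refine Finset.sum_congr rfl fun k _ => ?_
      rw [integral_const_mul, (key2 hY hYs hindep hident hmom r (hmem i hi) (k+1) (n-k)).2,
        Finset.card_erase_of_mem hi, Finset.card_range]
      ring
    rw [Finset.sum_congr rfl hin, Finset.sum_const, Finset.card_range, nsmul_eq_mul]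

lemma momA_fwdDiff (m : ℕ → ℝ) (r : ℕ) (hm0 : m 0 = 1) (n : ℕ) :
    Δ_[1] (fun j => momA m r j n) =
      fun j => ∑ k ∈ Finset.range n, (n.choose (k+1) : ℝ) * m (k+1) * momA m r j (n-(k+1)) := by
  funext j
  show momA m r (j+1) n - momA m r j n = _
  rw [momA, Finset.sum_range_succ']
  simp [hm0]

lemma iter_fwdDiff_zero (a : ℕ) : Δ_[(1:ℕ)] ^[a] (fun _ => (0:ℝ)) = fun _ => 0 :=
  Function.iterate_fixed (by simp [fwdDiff]) a

lemma iter_vanish_mono {F : ℕ → ℝ} {a b : ℕ}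
    (h : Δ_[(1:ℕ)] ^[a] F = fun _ => 0) (hab : a ≤ b) :
    Δ_[(1:ℕ)] ^[b] F = fun _ => 0 := by
  obtain ⟨c, rfl⟩ := Nat.exists_eq_add_of_le hab
  rw [add_comm, Function.iterate_add_apply, h, iter_fwdDiff_zero]

lemma momA_iter_vanish (m : ℕ → ℝ) (r : ℕ) (hm0 : m 0 = 1) :
    ∀ n, Δ_[(1:ℕ)] ^[n+1] (fun j => momA m r j n) = fun _ => (0:ℝ) := by
  intro n
  induction n using Nat.strong_induction_on with
  | _ n IH =>
    rw [Function.iterate_succ_apply, momA_fwdDiff m r hm0 n]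
    have hfun : (fun j => ∑ k ∈ Finset.range n,
        (n.choose (k+1) : ℝ) * m (k+1) * momA m r j (n-(k+1))) =
        ∑ k ∈ Finset.range n, ((n.choose (k+1) : ℝ) * m (k+1)) •
          (fun j => momA m r j (n-(k+1))) := by
      funext j
      simp [Finset.sum_apply, mul_assoc]
    rw [hfun, fwdDiff_iter_finset_sum]
    funext j
    rw [Finset.sum_apply]
    refine Finset.sum_eq_zero fun k hk => ?_
    rw [fwdDiff_iter_const_smul]
    have hk' : k < n := Finset.mem_range.mp hk
    rw [iter_vanish_mono (IH (n - (k+1)) (by omega)) (by omega)]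
    simp

lemma stirling_sum_eq_iter (f : ℕ → ℝ) (k : ℕ) :
    ∑ j ∈ Finset.range (k + 1), (k.choose j : ℝ) * (-1) ^ (k - j) * f j =
      Δ_[(1:ℕ)] ^[k] f 0 := by
  rw [fwdDiff_iter_eq_sum_shift]
  refine Finset.sum_congr rfl fun j hj => ?_
  have h : (0 + j • (1:ℕ)) = j := by simp
  rw [h, zsmul_eq_mul]
  push_cast
  ring

lemma stirling_sum_rec (A : ℕ → ℕ → ℝ) (c : ℕ → ℝ) (rr : ℝ) (n k : ℕ)
    (hrec : ∀ j, A j (n+1) = rr * A j n +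
      (j : ℝ) * ∑ l ∈ Finset.range (n+1), c l * A (j-1) (n-l)) :
    ∑ j ∈ Finset.range (k+2), ((k+1).choose j : ℝ) * (-1) ^ (k+1-j) * A j (n+1) =
      rr * ∑ j ∈ Finset.range (k+2), ((k+1).choose j : ℝ) * (-1) ^ (k+1-j) * A j n +
      ((k:ℝ)+1) * ∑ l ∈ Finset.range (n+1), c l *
        ∑ j ∈ Finset.range (k+1), (k.choose j : ℝ) * (-1) ^ (k-j) * A j (n-l) := by
  have h1 : ∀ j ∈ Finset.range (k+2),
      ((k+1).choose j : ℝ) * (-1) ^ (k+1-j) * A j (n+1) =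
      rr * (((k+1).choose j : ℝ) * (-1) ^ (k+1-j) * A j n) +
      ((k+1).choose j : ℝ) * (-1) ^ (k+1-j) *
        ((j:ℝ) * ∑ l ∈ Finset.range (n+1), c l * A (j-1) (n-l)) := by
    intro j _
    rw [hrec j]; ring
  rw [Finset.sum_congr rfl h1, Finset.sum_add_distrib, ← Finset.mul_sum]
  congr 1
  rw [Finset.sum_range_succ']
  have h0 : ((k+1).choose 0 : ℝ) * (-1) ^ (k+1-0) *
      (((0:ℕ):ℝ) * ∑ l ∈ Finset.range (n+1), c l * A (0-1) (n-l)) = 0 := by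
    norm_num
  rw [h0, add_zero]
  have h2 : ∀ j ∈ Finset.range (k+1),
      ((k+1).choose (j+1) : ℝ) * (-1) ^ (k+1-(j+1)) *
        ((((j+1):ℕ):ℝ) * ∑ l ∈ Finset.range (n+1), c l * A (j+1-1) (n-l)) =
      ((k:ℝ)+1) * ((k.choose j : ℝ) * (-1) ^ (k-j) *
        ∑ l ∈ Finset.range (n+1), c l * A j (n-l)) := by
    intro j _
    have hc : ((k:ℝ)+1) * (k.choose j : ℝ) = ((k+1).choose (j+1) : ℝ) * (((j+1:ℕ)) : ℝ) := by
      exact_mod_cast Nat.add_one_mul_choose_eq k j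
    have hs : k + 1 - (j+1) = k - j := by omega
    rw [hs, Nat.add_sub_cancel]
    push_cast at hc ⊢
    linear_combination -((-1:ℝ))^(k-j) * (∑ l ∈ Finset.range (n+1), c l * A j (n-l)) * hc
  rw [Finset.sum_congr rfl h2, ← Finset.mul_sum]
  congr 1
  have h3 : ∀ j ∈ Finset.range (k+1),
      (k.choose j : ℝ) * (-1) ^ (k-j) * ∑ l ∈ Finset.range (n+1), c l * A j (n-l) =
      ∑ l ∈ Finset.range (n+1), c l * ((k.choose j : ℝ) * (-1) ^ (k-j) * A j (n-l)) := by
    intro j _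
    rw [Finset.mul_sum]
    exact Finset.sum_congr rfl fun l _ => by ring
  rw [Finset.sum_congr rfl h3, Finset.sum_comm]
  exact Finset.sum_congr rfl fun l _ => by rw [Finset.mul_sum]

lemma stirling_momA_sum (hY : Measurable Y) (hYs : ∀ i, Measurable (Ys i))
    (hindep : iIndepFun Ys μ)
    (hident : ∀ i, IdentDistrib (Ys i) Y μ μ)
    (hmom : ∀ k, Integrable (fun ω => Y ω ^ k) μ) (r n k : ℕ) :
    probStirling μ Ys r n k = (1 / (k.factorial : ℝ)) * ∑ j ∈ Finset.range (k+1),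
      (k.choose j : ℝ) * (-1) ^ (k-j) * momA (fun p => ∫ ω, Y ω ^ p ∂μ) r j n := by
  unfold probStirling
  congr 1
  refine Finset.sum_congr rfl fun j _ => ?_
  congr 1
  have := (key hY hYs hindep hident hmom r (Finset.range j) n).2
  rwa [Finset.card_range] at this

lemma stirling_vanish (hY : Measurable Y) (hYs : ∀ i, Measurable (Ys i))
    (hindep : iIndepFun Ys μ)
    (hident : ∀ i, IdentDistrib (Ys i) Y μ μ)
    (hmom : ∀ k, Integrable (fun ω => Y ω ^ k) μ) (r : ℕ) {n k : ℕ} (h : n < k) :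
    probStirling μ Ys r n k = 0 := by
  rw [stirling_momA_sum hY hYs hindep hident hmom r n k, stirling_sum_eq_iter]
  have hm0 : (fun p => ∫ ω, Y ω ^ p ∂μ) 0 = 1 := by simp
  rw [iter_vanish_mono (momA_iter_vanish _ r hm0 n) h]
  simp

lemma stirling_zero (hY : Measurable Y) (hYs : ∀ i, Measurable (Ys i))
    (hindep : iIndepFun Ys μ)
    (hident : ∀ i, IdentDistrib (Ys i) Y μ μ)
    (hmom : ∀ k, Integrable (fun ω => Y ω ^ k) μ) (r n : ℕ) :
    probStirling μ Ys r n 0 = (r:ℝ) ^ n := by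
  rw [stirling_momA_sum hY hYs hindep hident hmom r n 0]
  simp [momA]

lemma stirling_rec (hY : Measurable Y) (hYs : ∀ i, Measurable (Ys i))
    (hindep : iIndepFun Ys μ)
    (hident : ∀ i, IdentDistrib (Ys i) Y μ μ)
    (hmom : ∀ k, Integrable (fun ω => Y ω ^ k) μ) (r n k : ℕ) :
    probStirling μ Ys r (n+1) (k+1) = (r:ℝ) * probStirling μ Ys r n (k+1) +
      ∑ l ∈ Finset.range (n+1), (n.choose l : ℝ) * (∫ ω, Y ω ^ (l+1) ∂μ) *
        probStirling μ Ys r (n-l) k := by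
  set m : ℕ → ℝ := fun p => ∫ ω, Y ω ^ p ∂μ with hm
  have hmain := stirling_sum_rec (fun j p => momA m r j p)
    (fun l => (n.choose l : ℝ) * (∫ ω, Y ω ^ (l+1) ∂μ)) (r:ℝ) n k
    (fun j => momA_rec hY hYs hindep hident hmom r j n)
  have hsum : ∑ l ∈ Finset.range (n+1), (n.choose l : ℝ) * (∫ ω, Y ω ^ (l+1) ∂μ) *
      probStirling μ Ys r (n-l) k =
      (1 / (k.factorial : ℝ)) * ∑ l ∈ Finset.range (n+1),
        ((n.choose l : ℝ) * (∫ ω, Y ω ^ (l+1) ∂μ)) *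
        ∑ j ∈ Finset.range (k+1), (k.choose j : ℝ) * (-1) ^ (k-j) * momA m r j (n-l) := by
    rw [Finset.mul_sum]
    refine Finset.sum_congr rfl fun l _ => ?_
    rw [stirling_momA_sum hY hYs hindep hident hmom r (n-l) k]
    ring
  rw [stirling_momA_sum hY hYs hindep hident hmom r (n+1) (k+1),
    stirling_momA_sum hY hYs hindep hident hmom r n (k+1), hsum]
  have hrange : k + 1 + 1 = k + 2 := rfl
  rw [hrange, hmain]
  have hfac : ((k+1).factorial : ℝ) = ((k:ℝ)+1) * (k.factorial : ℝ) := by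
    rw [Nat.factorial_succ]; push_cast; ring
  rw [hfac]
  have hk1 : ((k:ℝ)+1) ≠ 0 := by positivity
  have hk2 : (k.factorial : ℝ) ≠ 0 := by positivity
  field_simp
  ring

end Aux

/-- Recurrence for the probabilistic `r`-Bell polynomials:
`φ_{n+1,r}^Y(x) = x Σ_{k=0}^n binom(n,k) E[Y^{k+1}] φ_{n-k,r}^Y(x) + r φ_{n,r}^Y(x)`. -/
theorem probBell_recurrence
    {Ω : Type*} [MeasurableSpace Ω] (μ : Measure Ω) [IsProbabilityMeasure μ]
    (Y : Ω → ℝ) (Ys : ℕ → Ω → ℝ)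
    (hY : Measurable Y) (hYs : ∀ i, Measurable (Ys i))
    (hindep : iIndepFun Ys μ)
    (hident : ∀ i, IdentDistrib (Ys i) Y μ μ)
    (ε : ℝ) (hε : 0 < ε)
    (hmgf : ∀ t : ℝ, |t| < ε → Integrable (fun ω => Real.exp (t * Y ω)) μ)
    (n r : ℕ) (x : ℝ) :
    probBell μ Ys r (n + 1) x =
      x * ∑ k ∈ Finset.range (n + 1),
        (n.choose k : ℝ) * (∫ ω, Y ω ^ (k + 1) ∂μ) * probBell μ Ys r (n - k) x +
      (r : ℝ) * probBell μ Ys r n x := by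
  classical
  have hmom : ∀ k, Integrable (fun ω => Y ω ^ k) μ := mom_integrable hY hε hmgf
  -- sum over range (n+1) of shifted Stirling times x powers equals Bell minus r^n
  have hA : ∑ k ∈ Finset.range (n+1), probStirling μ Ys r n (k+1) * x ^ (k+1) =
      probBell μ Ys r n x - (r:ℝ) ^ n := by
    have h1 := Finset.sum_range_succ (fun k => probStirling μ Ys r n k * x ^ k) (n+1)
    have h2 := Finset.sum_range_succ' (fun k => probStirling μ Ys r n k * x ^ k) (n+1)
    rw [stirling_vanish hY hYs hindep hident hmom r (Nat.lt_succ_self n)] at h1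
    rw [stirling_zero hY hYs hindep hident hmom r n] at h2
    unfold probBell
    simp only [pow_zero, mul_one, zero_mul, add_zero] at h1 h2
    rw [← h1, h2]
    ring
  have hB : ∀ l ∈ Finset.range (n+1),
      ∑ k ∈ Finset.range (n+1), probStirling μ Ys r (n-l) k * x ^ k =
      probBell μ Ys r (n-l) x := by
    intro l hl
    have hle : n - l + 1 ≤ n + 1 := by omega
    unfold probBell
    exact (Finset.sum_subset (Finset.range_subset_range.mpr hle) fun k hk hk' => by
      rw [stirling_vanish hY hYs hindep hident hmom r
        (by simp only [Finset.mem_range] at hk hk'; omega), zero_mul]).symm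
  have step1 : probBell μ Ys r (n+1) x =
      ∑ k ∈ Finset.range (n+1), probStirling μ Ys r (n+1) (k+1) * x ^ (k+1) +
        probStirling μ Ys r (n+1) 0 * x ^ 0 := by
    unfold probBell
    exact Finset.sum_range_succ' _ _
  rw [step1, stirling_zero hY hYs hindep hident hmom r (n+1)]
  have step2 : ∀ k ∈ Finset.range (n+1),
      probStirling μ Ys r (n+1) (k+1) * x ^ (k+1) =
      (r:ℝ) * (probStirling μ Ys r n (k+1) * x ^ (k+1)) +
      ∑ l ∈ Finset.range (n+1), ((n.choose l : ℝ) * (∫ ω, Y ω ^ (l+1) ∂μ) *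
        probStirling μ Ys r (n-l) k) * x ^ (k+1) := by
    intro k _
    rw [stirling_rec hY hYs hindep hident hmom r n k, add_mul, Finset.sum_mul]
    ring
  rw [Finset.sum_congr rfl step2, Finset.sum_add_distrib, ← Finset.mul_sum, hA]
  have step3 : ∑ k ∈ Finset.range (n+1), ∑ l ∈ Finset.range (n+1),
      ((n.choose l : ℝ) * (∫ ω, Y ω ^ (l+1) ∂μ) * probStirling μ Ys r (n-l) k) * x ^ (k+1) =
      x * ∑ l ∈ Finset.range (n+1), (n.choose l : ℝ) * (∫ ω, Y ω ^ (l+1) ∂μ) *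
        probBell μ Ys r (n-l) x := by
    rw [Finset.sum_comm, Finset.mul_sum]
    refine Finset.sum_congr rfl fun l hl => ?_
    rw [← hB l hl, Finset.mul_sum, Finset.mul_sum]
    exact Finset.sum_congr rfl fun k _ => by ring
  rw [step3]
  ring
end

section
/- (Spivey's recurrence.) For all integers n, l ≥ 0, the Bell numbers satisfy φ_{l+n} = Σ_{k=0}^{n} Σ_{m=0}^{l} binom(l,m) S(n,k) k^{l−m} φ_{m}, where 0^0 is interpreted as 1. -/
/-- The Stirling numbers of the second kind `S(n,k)`, counting the number of
partitions of an `n`-element set into `k` nonempty blocks, via the standard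
recurrence `S(n+1,k+1) = (k+1) S(n,k+1) + S(n,k)`. -/
def stirling2 : ℕ → ℕ → ℕ
  | 0, 0 => 1
  | 0, _ + 1 => 0
  | _ + 1, 0 => 0
  | n + 1, k + 1 => (k + 1) * stirling2 n (k + 1) + stirling2 n k

/-- The Bell numbers `φ_n = Σ_{k=0}^n S(n,k)`. -/
def bellNum (n : ℕ) : ℕ := ∑ k ∈ Finset.range (n + 1), stirling2 n k

open Finset

lemma st_succ (n k : ℕ) :
    stirling2 (n+1) (k+1) = (k + 1) * stirling2 n (k + 1) + stirling2 n k := rfl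

lemma st_zero_of_lt : ∀ {n k : ℕ}, n < k → stirling2 n k = 0
  | 0, _+1, _ => rfl
  | n+1, k+1, h => by
    rw [st_succ, st_zero_of_lt (Nat.lt_of_succ_lt_succ h),
      st_zero_of_lt (Nat.lt_of_succ_lt_succ (Nat.lt_succ_of_lt h))]
    simp

lemma pascal_split (m r : ℕ) :
    ∑ j ∈ range (m+2), (m+1).choose j * stirling2 j r
      = (∑ j ∈ range (m+1), m.choose j * stirling2 (j+1) r)
        + ∑ j ∈ range (m+1), m.choose j * stirling2 j r := calc
  ∑ j ∈ range (m+2), (m+1).choose j * stirling2 j r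
      = (∑ j ∈ range (m+1), (m+1).choose (j+1) * stirling2 (j+1) r)
          + (m+1).choose 0 * stirling2 0 r := Finset.sum_range_succ' _ (m+1)
  _ = (∑ j ∈ range (m+1), m.choose j * stirling2 (j+1) r)
        + ((∑ j ∈ range (m+1), m.choose (j+1) * stirling2 (j+1) r)
            + m.choose 0 * stirling2 0 r) := by
      simp only [Nat.choose_succ_succ, add_mul, Finset.sum_add_distrib,
        Nat.choose_zero_right, one_mul, add_assoc]
  _ = (∑ j ∈ range (m+1), m.choose j * stirling2 (j+1) r)
        + ∑ j ∈ range (m+2), m.choose j * stirling2 j r := by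
      rw [← Finset.sum_range_succ' (fun j => m.choose j * stirling2 j r) (m+1)]
  _ = (∑ j ∈ range (m+1), m.choose j * stirling2 (j+1) r)
        + ∑ j ∈ range (m+1), m.choose j * stirling2 j r := by
      rw [Finset.sum_range_succ (fun j => m.choose j * stirling2 j r) (m+1)]
      simp [Nat.choose_succ_self]

/-- `S(m+1, r+1) = Σ_{j≤m} C(m,j) S(j,r)` -/
lemma stirling_binom : ∀ m r : ℕ,
    stirling2 (m+1) (r+1) = ∑ j ∈ range (m+1), m.choose j * stirling2 j r
  | 0, r => by
    rw [st_succ]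
    cases r <;> simp [stirling2]
  | m+1, r => by
    have IH := stirling_binom m
    rw [st_succ, pascal_split, ← IH r]
    cases r with
    | zero =>
      have h0 : ∀ j, stirling2 (j+1) 0 = 0 := fun j => rfl
      simp only [h0, mul_zero, Finset.sum_const_zero, zero_add]
      rw [st_succ]
      simp [show stirling2 (m+1) 0 = 0 from rfl]
    | succ r =>
      have : ∀ j ∈ range (m+1), m.choose j * stirling2 (j+1) (r+1)
          = (r+1) * (m.choose j * stirling2 j (r+1)) + m.choose j * stirling2 j r := by
        intro j _
        rw [st_succ]; ring
      rw [Finset.sum_congr rfl this, Finset.sum_add_distrib, ← Finset.mul_sum,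
        ← IH (r+1), ← IH r]
      ring

lemma bell_sum_range {j N : ℕ} (h : j < N) : ∑ r ∈ range N, stirling2 j r = bellNum j := by
  rw [bellNum]
  symm
  apply Finset.sum_subset
  · intro x hx; simp only [Finset.mem_range] at *; omega
  · intro x _ hx
    simp only [Finset.mem_range, not_lt] at hx
    exact st_zero_of_lt (by omega)

lemma bell_succ (m : ℕ) : bellNum (m+1) = ∑ j ∈ range (m+1), m.choose j * bellNum j := by
  rw [bellNum, Finset.sum_range_succ' (fun r => stirling2 (m+1) r) (m+1)]
  have h0 : stirling2 (m+1) 0 = 0 := rfl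
  rw [h0, add_zero]
  simp only [stirling_binom]
  rw [Finset.sum_comm]
  refine Finset.sum_congr rfl fun j hj => ?_
  rw [← Finset.mul_sum, bell_sum_range (Finset.mem_range.mp hj)]

lemma choose_pow_sum (p k : ℕ) :
    ∑ i ∈ range (p+1), p.choose i * k ^ (p - i) = (k+1) ^ p := by
  have := add_pow 1 k p
  simp only [one_pow, one_mul] at this
  rw [add_comm k 1, this]
  exact Finset.sum_congr rfl fun i _ => mul_comm _ _

lemma inner_vandermonde (l k j : ℕ) (hj : j ≤ l) :
    ∑ m ∈ range (l+1), l.choose m * m.choose j * k ^ (l - m)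
      = l.choose j * (k+1) ^ (l - j) := by
  have h1 : ∑ m ∈ range (l+1), l.choose m * m.choose j * k ^ (l - m)
      = ∑ m ∈ Ico j (l+1), l.choose m * m.choose j * k ^ (l - m) := by
    symm
    apply Finset.sum_subset
    · intro x hx; simp only [Finset.mem_Ico, Finset.mem_range] at *; omega
    · intro x _ hx
      simp only [Finset.mem_range, Finset.mem_Ico, not_and, not_le] at hx
      rcases Finset.mem_range.mp ‹x ∈ range (l+1)› with _
      have hxj : x < j := by
        by_contra hc
        exact absurd (hx (le_of_not_gt hc)) (by omega)
      rw [Nat.choose_eq_zero_of_lt hxj, mul_zero, zero_mul]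
  rw [h1, Finset.sum_Ico_eq_sum_range]
  have h2 : ∀ i ∈ range (l + 1 - j), l.choose (j+i) * (j+i).choose j * k ^ (l - (j+i))
      = l.choose j * ((l-j).choose i * k ^ ((l-j) - i)) := by
    intro i hi
    have hi' : i ≤ l - j := by have := Finset.mem_range.mp hi; omega
    have h3 : l.choose (j+i) * (j+i).choose j = l.choose j * (l - j).choose i := by
      have := Nat.choose_mul (n := l) (k := j+i) (s := j) (by omega)
      simpa using this
    rw [← mul_assoc, h3, mul_assoc, show l - (j+i) = l - j - i by omega, mul_assoc]
  rw [Finset.sum_congr rfl h2, ← Finset.mul_sum]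
  have : l + 1 - j = (l - j) + 1 := by omega
  rw [this, choose_pow_sum]

lemma keyL (l k : ℕ) :
    ∑ m ∈ range (l+1), l.choose m * (k+1) ^ (l-m) * bellNum m
      = ∑ m ∈ range (l+1), l.choose m * k ^ (l-m) * bellNum (m+1) := by
  have hR : ∀ m ∈ range (l+1), l.choose m * k ^ (l-m) * bellNum (m+1)
      = ∑ j ∈ range (l+1), l.choose m * m.choose j * k ^ (l-m) * bellNum j := by
    intro m hm
    have hml : m + 1 ≤ l + 1 := by have := Finset.mem_range.mp hm; omega
    have hpad : ∑ j ∈ range (l+1), l.choose m * m.choose j * k ^ (l-m) * bellNum j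
        = ∑ j ∈ range (m+1), l.choose m * m.choose j * k ^ (l-m) * bellNum j := by
      symm
      apply Finset.sum_subset (Finset.range_subset_range.mpr hml)
      intro x _ hx
      have : m < x := by simpa using hx
      rw [Nat.choose_eq_zero_of_lt this]
      ring
    rw [hpad, bell_succ, Finset.mul_sum]
    exact Finset.sum_congr rfl fun j _ => by ring
  symm
  calc ∑ m ∈ range (l+1), l.choose m * k ^ (l-m) * bellNum (m+1)
      = ∑ m ∈ range (l+1), ∑ j ∈ range (l+1),
          l.choose m * m.choose j * k ^ (l-m) * bellNum j := Finset.sum_congr rfl hR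
    _ = ∑ j ∈ range (l+1), ∑ m ∈ range (l+1),
          l.choose m * m.choose j * k ^ (l-m) * bellNum j := Finset.sum_comm
    _ = ∑ j ∈ range (l+1), l.choose j * (k+1) ^ (l-j) * bellNum j := by
        refine Finset.sum_congr rfl fun j hj => ?_
        rw [← Finset.sum_mul, inner_vandermonde l k j (by have := Finset.mem_range.mp hj; omega)]

/-- The inner sum with exponent `l+1-m`, as a function of `k`. -/
private def Gf (n l k : ℕ) : ℕ :=
  ∑ m ∈ range (l+1), l.choose m * stirling2 n k * k ^ (l+1-m) * bellNum m

lemma Gf_zero (n l : ℕ) : Gf n l 0 = 0 := by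
  apply Finset.sum_eq_zero
  intro m hm
  have hm' : m ≤ l := by have := Finset.mem_range.mp hm; omega
  rw [zero_pow (by omega : l+1-m ≠ 0)]
  ring

lemma Gf_top (n l : ℕ) : Gf n l (n+1) = 0 := by
  apply Finset.sum_eq_zero
  intro m _
  rw [st_zero_of_lt (Nat.lt_succ_self n)]
  ring

lemma Gf_shift (n l : ℕ) :
    ∑ k ∈ range (n+1), Gf n l (k+1) = ∑ k ∈ range (n+1), Gf n l k := by
  have e1 := Finset.sum_range_succ' (fun k => Gf n l k) (n+1)
  have e2 := Finset.sum_range_succ (fun k => Gf n l k) (n+1)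
  simp only [Gf_zero, Gf_top, add_zero] at e1 e2
  exact e1.symm.trans e2

/-- splitting the inner sum of the RHS at level `l+1` -/
lemma rhs_inner_split (n l k : ℕ) :
    ∑ m ∈ range (l+2), (l+1).choose m * stirling2 n k * k ^ (l+1-m) * bellNum m
      = Gf n l k
        + ∑ m ∈ range (l+1), l.choose m * stirling2 n k * k ^ (l-m) * bellNum (m+1) := by
  rw [Finset.sum_range_succ'
    (fun m => (l+1).choose m * stirling2 n k * k ^ (l+1-m) * bellNum m) (l+1)]
  have hterm : ∀ m ∈ range (l+1),
      (l+1).choose (m+1) * stirling2 n k * k ^ (l+1-(m+1)) * bellNum (m+1)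
        = l.choose m * stirling2 n k * k ^ (l-m) * bellNum (m+1)
          + l.choose (m+1) * stirling2 n k * k ^ (l+1-(m+1)) * bellNum (m+1) := by
    intro m _
    rw [Nat.choose_succ_succ']
    have : l+1-(m+1) = l-m := by omega
    rw [this]
    ring
  rw [Finset.sum_congr rfl hterm, Finset.sum_add_distrib]
  have hG : (∑ m ∈ range (l+1),
        l.choose (m+1) * stirling2 n k * k ^ (l+1-(m+1)) * bellNum (m+1))
      + (l+1).choose 0 * stirling2 n k * k ^ (l+1-0) * bellNum 0
      = Gf n l k := by
    have e1 := Finset.sum_range_succ'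
      (fun m => l.choose m * stirling2 n k * k ^ (l+1-m) * bellNum m) (l+1)
    have e2 := Finset.sum_range_succ
      (fun m => l.choose m * stirling2 n k * k ^ (l+1-m) * bellNum m) (l+1)
    rw [Nat.choose_succ_self] at e2
    simp only [zero_mul] at e2
    rw [add_zero] at e2
    simp only [Nat.choose_zero_right] at e1 ⊢
    rw [← e2.symm.trans e1, Gf]
  rw [← hG]
  ring

/-- Spivey's recurrence for the Bell numbers. -/
theorem spivey_recurrence (n l : ℕ) :
    bellNum (l + n) =
      ∑ k ∈ Finset.range (n + 1), ∑ m ∈ Finset.range (l + 1),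
        l.choose m * stirling2 n k * k ^ (l - m) * bellNum m := by
  induction l generalizing n with
  | zero =>
    have hb0 : bellNum 0 = 1 := rfl
    simp [hb0, bellNum, show stirling2 0 0 = 1 from rfl]
  | succ l IH =>
    -- transform the left side
    have h1 : l + 1 + n = l + (n+1) := by omega
    rw [h1, IH (n+1)]
    -- drop the k = 0 term and shift
    rw [Finset.sum_range_succ'
      (fun k => ∑ m ∈ range (l+1), l.choose m * stirling2 (n+1) k * k ^ (l-m) * bellNum m)
      (n+1)]
    have hF0 : ∑ m ∈ range (l+1),
        l.choose m * stirling2 (n+1) 0 * 0 ^ (l-m) * bellNum m = 0 := by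
      apply Finset.sum_eq_zero; intro m _
      rw [show stirling2 (n+1) 0 = 0 from rfl]; ring
    rw [hF0, add_zero]
    -- split via the Stirling recurrence
    have hsplit : ∀ k ∈ range (n+1),
        (∑ m ∈ range (l+1), l.choose m * stirling2 (n+1) (k+1) * (k+1) ^ (l-m) * bellNum m)
          = Gf n l (k+1)
            + ∑ m ∈ range (l+1), l.choose m * stirling2 n k * (k+1) ^ (l-m) * bellNum m := by
      intro k _
      rw [Gf, ← Finset.sum_add_distrib]
      refine Finset.sum_congr rfl fun m hm => ?_
      have hm' : m ≤ l := by have := Finset.mem_range.mp hm; omega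
      rw [st_succ, show l+1-m = (l-m)+1 by omega, pow_succ]
      ring
    rw [Finset.sum_congr rfl hsplit, Finset.sum_add_distrib, Gf_shift]
    -- apply the key lemma to the second part
    have hkey : ∀ k ∈ range (n+1),
        (∑ m ∈ range (l+1), l.choose m * stirling2 n k * (k+1) ^ (l-m) * bellNum m)
          = ∑ m ∈ range (l+1), l.choose m * stirling2 n k * k ^ (l-m) * bellNum (m+1) := by
      intro k _
      have h := keyL l k
      calc ∑ m ∈ range (l+1), l.choose m * stirling2 n k * (k+1) ^ (l-m) * bellNum m
          = ∑ m ∈ range (l+1), (l.choose m * (k+1) ^ (l-m) * bellNum m) * stirling2 n k :=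
            Finset.sum_congr rfl fun m _ => by ring
        _ = (∑ m ∈ range (l+1), l.choose m * (k+1) ^ (l-m) * bellNum m) * stirling2 n k :=
            (Finset.sum_mul _ _ _).symm
        _ = (∑ m ∈ range (l+1), l.choose m * k ^ (l-m) * bellNum (m+1)) * stirling2 n k := by
            rw [h]
        _ = ∑ m ∈ range (l+1), (l.choose m * k ^ (l-m) * bellNum (m+1)) * stirling2 n k :=
            Finset.sum_mul _ _ _
        _ = ∑ m ∈ range (l+1), l.choose m * stirling2 n k * k ^ (l-m) * bellNum (m+1) :=
            Finset.sum_congr rfl fun m _ => by ring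
    rw [Finset.sum_congr rfl hkey, ← Finset.sum_add_distrib]
    -- identify with the split right side
    exact (Finset.sum_congr rfl fun k _ => (rhs_inner_split n l k)).symm
end
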